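/- Let τ ∈ H and c ∈ ℂ. The function g(x) := c·exp(−πiτx²)·erfc(√(−iπτ)·x) (principal square root, which is well defined since Re(−iπτ) > 0) is bounded and differentiable on (0,∞), tends to 0 as x → ∞, and satisfies the differential equation g'(x) + 2πiτ·x·g(x) = −2√(−iτ)·c for all x > 0. Moreover, any bounded differentiable function h on (0,∞) satisfying h'(x) + 2πiτ·x·h(x) = −2√(−iτ)·c for all x > 0 is equal to g. -/

import Mathlib

open MeasureTheory Filter Set intervalIntegral

noncomputable section

/-- The entire extension of the complementary error function:
`erfc(z) = 1 - (2/√π)∫_0^1 z·e^{-z²t²} dt`. -/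
def erfcC (z : ℂ) : ℂ :=
  1 - (2 / Real.sqrt Real.pi) * ∫ t in (0:ℝ)..1, z * Complex.exp (-(z ^ 2) * (t : ℂ) ^ 2)

/-- Principal square root of a complex number. -/
def csqrt (z : ℂ) : ℂ := z ^ (1 / 2 : ℂ)

lemma csq {z : ℂ} (hz : z ≠ 0) : csqrt z ^ 2 = z := by
  rw [csqrt, sq, ← Complex.cpow_add _ _ hz]
  norm_num

lemma csqrt_re_pos {z : ℂ} (hz : 0 < z.re) : 0 < (csqrt z).re := by
  have hz0 : z ≠ 0 := fun h => by simp [h] at hz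
  rw [csqrt, Complex.cpow_def_of_ne_zero hz0, Complex.exp_re]
  refine mul_pos (Real.exp_pos _) (Real.cos_pos_of_mem_Ioo ?_)
  have harg : |z.arg| < Real.pi / 2 := Complex.abs_arg_lt_pi_div_two_iff.2 (Or.inl hz)
  have him : (Complex.log z * (1/2 : ℂ)).im = z.arg * (1/2) := by
    simp [Complex.mul_im, Complex.log_im]
  rw [him]
  have h1 := abs_lt.1 harg
  have h2 := Real.pi_pos
  constructor <;> [nlinarith; nlinarith]

lemma sq_inj {z w : ℂ} (hz : 0 < z.re) (hw : 0 < w.re) (h : z^2 = w^2) : z = w := by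
  have h2 : (z - w) * (z + w) = 0 := by linear_combination h
  rcases mul_eq_zero.1 h2 with h3 | h3
  · exact sub_eq_zero.1 h3
  · exfalso
    have : (z + w).re = 0 := by rw [h3]; simp
    rw [Complex.add_re] at this
    linarith

lemma integral_exp_neg_mul_Ioi {c : ℝ} (hc : 0 < c) (x : ℝ) :
    ∫ t in Ioi x, Real.exp (-(c*t)) = Real.exp (-(c*x))/c := by
  have hder : ∀ t ∈ Ici x, HasDerivAt (fun t => -(Real.exp (-(c*t))/c)) (Real.exp (-(c*t))) t := by
    intro t _
    have h1 : HasDerivAt (fun t:ℝ => -(c*t)) (-c) t := by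
      simpa [mul_comm] using (hasDerivAt_id t).const_mul (-c)
    have := (h1.exp.div_const c).neg
    refine this.congr_deriv ?_
    field_simp [hc.ne']
  have hint : IntegrableOn (fun t => Real.exp (-(c*t))) (Ioi x) := by
    simpa [neg_mul] using exp_neg_integrableOn_Ioi x hc
  have hlim : Tendsto (fun t => -(Real.exp (-(c*t))/c)) atTop (nhds 0) := by
    have h2 : Tendsto (fun t:ℝ => -(c*t)) atTop atBot := by
      simpa [mul_comm] using tendsto_id.const_mul_atTop_of_neg (neg_neg_iff_pos.2 hc) |>.comp (tendsto_id (α := ℝ))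
    have := (Real.tendsto_exp_atBot.comp h2).neg.div_const c
    simpa [neg_div] using this
  rw [integral_Ioi_of_hasDerivAt_of_tendsto' hder hint hlim]
  ring


def bb (τ : ℂ) : ℂ := -Complex.I * (Real.pi : ℂ) * τ
def aa (τ : ℂ) : ℂ := csqrt (bb τ)
def ff (τ : ℂ) (t : ℝ) : ℂ := aa τ * Complex.exp (-(bb τ) * (t:ℂ)^2)
def uu (τ : ℂ) (x : ℝ) : ℂ := ∫ t in (0:ℝ)..x, ff τ t
def GG (τ c : ℂ) (x : ℝ) : ℂ :=
  c * Complex.exp (bb τ * (x:ℂ)^2) * (1 - (2/(Real.sqrt Real.pi:ℂ)) * uu τ x)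

variable {τ : ℂ} (c : ℂ)

lemma bb_re : (bb τ).re = Real.pi * τ.im := by
  simp [bb, Complex.mul_re, Complex.mul_im]

lemma bb_re_pos (hτ : 0 < τ.im) : 0 < (bb τ).re := by rw [bb_re]; exact mul_pos Real.pi_pos hτ

lemma bb_ne (hτ : 0 < τ.im) : bb τ ≠ 0 := by
  intro h
  have := bb_re_pos hτ
  rw [h] at this; simp at this

lemma aa_sq (hτ : 0 < τ.im) : aa τ ^ 2 = bb τ := csq (bb_ne hτ)
lemma aa_re_pos (hτ : 0 < τ.im) : 0 < (aa τ).re := csqrt_re_pos (bb_re_pos hτ)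
lemma aa_ne (hτ : 0 < τ.im) : aa τ ≠ 0 := fun h => by have := aa_re_pos hτ; rw [h] at this; simp at this

lemma sqrt_pi_pos : (0:ℝ) < Real.sqrt Real.pi := Real.sqrt_pos.2 Real.pi_pos
lemma sq_sqrt_pi : ((Real.sqrt Real.pi : ℂ))^2 = (Real.pi : ℂ) := by
  rw [← Complex.ofReal_pow, Real.sq_sqrt Real.pi_pos.le]

lemma aa_eq (hτ : 0 < τ.im) : aa τ = (Real.sqrt Real.pi : ℂ) * csqrt (-Complex.I * τ) := by
  have h1 : (-Complex.I * τ).re = τ.im := by simp [Complex.mul_re]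
  have h2 : 0 < (-Complex.I * τ).re := by rw [h1]; exact hτ
  have h3 : -Complex.I * τ ≠ 0 := fun h => by rw [h] at h2; simp at h2
  refine sq_inj (aa_re_pos hτ) ?_ ?_
  · rw [Complex.re_ofReal_mul]
    exact mul_pos sqrt_pi_pos (csqrt_re_pos h2)
  · rw [mul_pow, csq h3, aa_sq hτ, sq_sqrt_pi, bb]
    ring

lemma ff_cont : Continuous (ff τ) :=
  continuous_const.mul ((continuous_const.mul (Complex.continuous_ofReal.pow 2)).cexp)

lemma ff_integrable (hτ : 0 < τ.im) : Integrable (ff τ) :=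
  (integrable_cexp_neg_mul_sq (bb_re_pos hτ)).const_mul _

lemma ff_norm (t : ℝ) : ‖ff τ t‖ = ‖aa τ‖ * Real.exp (-(bb τ).re * t^2) := by
  simp only [ff, norm_mul, Complex.norm_exp]
  congr 2
  rw [show -(bb τ) * (t:ℂ)^2 = (↑(t^2) : ℂ) * -(bb τ) by push_cast; ring, Complex.re_ofReal_mul]
  simp [Complex.neg_re]
  ring

lemma uu_hasDeriv (x : ℝ) : HasDerivAt (uu τ) (ff τ x) x :=
  ((ff_cont (τ := τ)).integral_hasStrictDerivAt 0 x).hasDerivAt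

lemma erfcC_eq (hτ : 0 < τ.im) (x : ℝ) : erfcC (aa τ * (x:ℂ)) = 1 - (2/(Real.sqrt Real.pi:ℂ)) * uu τ x := by
  have h1 : (fun t:ℝ => (aa τ * (x:ℂ)) * Complex.exp (-((aa τ * (x:ℂ))^2) * (t:ℂ)^2))
      = (fun t:ℝ => x • ff τ (t * x)) := by
    funext t
    have harg : -((aa τ * (x:ℂ))^2) * (t:ℂ)^2 = -(bb τ) * (((t*x : ℝ)):ℂ)^2 := by
      push_cast
      linear_combination (-(x:ℂ)^2*(t:ℂ)^2) * aa_sq hτ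
    simp only [ff, harg, Complex.real_smul]
    ring
  rw [erfcC]
  congr 2
  rw [h1, intervalIntegral.integral_smul, intervalIntegral.smul_integral_comp_mul_right (ff τ) x]
  simp [uu]

lemma g_eq_GG (hτ : 0 < τ.im) (g : ℝ → ℂ)
    (hg : ∀ x : ℝ, g x =
      c * Complex.exp (-(Real.pi : ℂ) * Complex.I * τ * (x : ℂ) ^ 2) *
        erfcC (csqrt (-Complex.I * (Real.pi : ℂ) * τ) * (x : ℂ))) :
    g = GG τ c := by
  funext x
  rw [hg x, GG, ← erfcC_eq hτ]
  have : -(Real.pi : ℂ) * Complex.I * τ * (x:ℂ)^2 = bb τ * (x:ℂ)^2 := by rw [bb]; ring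
  rw [this]
  rfl
lemma uu_L (hτ : 0 < τ.im) : ∫ t in Ioi (0:ℝ), ff τ t = ((Real.sqrt Real.pi : ℂ))/2 := by
  have hdre : 0 < ((Real.pi:ℂ) / bb τ).re := by
    rw [div_eq_mul_inv, Complex.re_ofReal_mul, Complex.inv_re]
    exact mul_pos Real.pi_pos (div_pos (bb_re_pos hτ) (Complex.normSq_pos.2 (bb_ne hτ)))
  have hne : ((Real.pi:ℂ) / bb τ) ≠ 0 :=
    div_ne_zero (Complex.ofReal_ne_zero.2 Real.pi_ne_zero) (bb_ne hτ)
  have h5 : ((Real.pi:ℂ)/bb τ) ^ (1/2:ℂ) = (Real.sqrt Real.pi : ℂ) / aa τ := by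
    refine sq_inj (csqrt_re_pos hdre) ?_ ?_
    · rw [div_eq_mul_inv, Complex.re_ofReal_mul, Complex.inv_re]
      exact mul_pos sqrt_pi_pos (div_pos (aa_re_pos hτ) (Complex.normSq_pos.2 (aa_ne hτ)))
    · rw [show ((Real.pi:ℂ)/bb τ) ^ (1/2:ℂ) = csqrt ((Real.pi:ℂ)/bb τ) from rfl,
        csq hne, div_pow, sq_sqrt_pi, aa_sq hτ]
  rw [show (fun t : ℝ => ff τ t) = fun t : ℝ => aa τ * Complex.exp (-(bb τ) * (t:ℂ)^2) from rfl,
    MeasureTheory.integral_const_mul, integral_gaussian_complex_Ioi (bb_re_pos hτ), h5]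
  field_simp [aa_ne hτ]

lemma uu_split (hτ : 0 < τ.im) {x : ℝ} (hx : 0 ≤ x) :
    uu τ x + ∫ t in Ioi x, ff τ t = ((Real.sqrt Real.pi : ℂ))/2 := by
  rw [← uu_L hτ, ← Set.Ioc_union_Ioi_eq_Ioi hx,
    MeasureTheory.setIntegral_union (Set.Ioc_disjoint_Ioi le_rfl) measurableSet_Ioi
      (ff_integrable hτ).integrableOn (ff_integrable hτ).integrableOn,
    uu, intervalIntegral.integral_of_le hx]

lemma E_eq (hτ : 0 < τ.im) {x : ℝ} (hx : 0 ≤ x) :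
    1 - (2/(Real.sqrt Real.pi:ℂ)) * uu τ x
      = (2/(Real.sqrt Real.pi:ℂ)) * ∫ t in Ioi x, ff τ t := by
  have h := uu_split hτ hx
  have hs : ((Real.sqrt Real.pi:ℝ):ℂ) ≠ 0 := by exact_mod_cast sqrt_pi_pos.ne'
  field_simp
  linear_combination (-2:ℂ) * h

lemma GG_norm (hτ : 0 < τ.im) (c : ℂ) {x : ℝ} (hx : 0 ≤ x) :
    ‖GG τ c x‖ = ‖c‖ * Real.exp ((bb τ).re * x^2)
      * ((2/Real.sqrt Real.pi) * ‖∫ t in Ioi x, ff τ t‖) := by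
  rw [GG, E_eq hτ hx, norm_mul, norm_mul, norm_mul]
  congr 2
  · rw [Complex.norm_exp,
      show bb τ * (x:ℂ)^2 = (↑(x^2) : ℂ) * bb τ by push_cast; ring, Complex.re_ofReal_mul]
    ring_nf
  · rw [norm_div, Complex.norm_real, Complex.norm_two, Real.norm_eq_abs,
      abs_of_nonneg sqrt_pi_pos.le]

lemma tail_bound (hτ : 0 < τ.im) {x : ℝ} (hx : 0 < x) :
    ‖∫ t in Ioi x, ff τ t‖
      ≤ ‖aa τ‖ * (Real.exp (-(bb τ).re * x^2) / (2*(bb τ).re*x)) := by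
  have hβ := bb_re_pos hτ
  set β := (bb τ).re with hβdef
  have hc2 : 0 < 2*β*x := by positivity
  have step1 : ‖∫ t in Ioi x, ff τ t‖ ≤ ∫ t in Ioi x, ‖ff τ t‖ := norm_integral_le_integral_norm _
  have step2 : ∫ t in Ioi x, ‖ff τ t‖
      ≤ ∫ t in Ioi x, (‖aa τ‖ * Real.exp (β*x^2)) * Real.exp (-((2*β*x)*t)) := by
    apply setIntegral_mono_on
    · exact (ff_integrable hτ).norm.integrableOn
    · have := (exp_neg_integrableOn_Ioi x hc2).const_mul (‖aa τ‖ * Real.exp (β*x^2))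
      simpa [neg_mul, IntegrableOn] using this
    · exact measurableSet_Ioi
    · intro t ht
      rw [ff_norm, mul_assoc]
      refine mul_le_mul_of_nonneg_left ?_ (norm_nonneg _)
      rw [← Real.exp_add, Real.exp_le_exp]
      nlinarith [sq_nonneg (t - x)]
  have step3 : ∫ t in Ioi x, (‖aa τ‖ * Real.exp (β*x^2)) * Real.exp (-((2*β*x)*t))
      = (‖aa τ‖ * Real.exp (β*x^2)) * (Real.exp (-((2*β*x)*x))/(2*β*x)) := by
    rw [MeasureTheory.integral_const_mul, integral_exp_neg_mul_Ioi hc2 x]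
  have hee : Real.exp (β*x^2) * Real.exp (-((2*β*x)*x)) = Real.exp (-β*x^2) := by
    rw [← Real.exp_add]; congr 1; ring
  refine le_trans (le_trans step1 step2) (le_of_eq ?_)
  rw [step3]
  calc ‖aa τ‖ * Real.exp (β*x^2) * (Real.exp (-((2*β*x)*x))/(2*β*x))
      = ‖aa τ‖ * ((Real.exp (β*x^2) * Real.exp (-((2*β*x)*x)))/(2*β*x)) := by ring
    _ = ‖aa τ‖ * (Real.exp (-β * x^2) / (2*β*x)) := by rw [hee]

lemma GG_decay (hτ : 0 < τ.im) (c : ℂ) :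
    ∃ K : ℝ, 0 ≤ K ∧ ∀ x : ℝ, 0 < x → ‖GG τ c x‖ ≤ K / x := by
  have hβ := bb_re_pos hτ
  set β := (bb τ).re with hβdef
  refine ⟨‖c‖ * (2/Real.sqrt Real.pi) * ‖aa τ‖ / (2*β), by positivity, ?_⟩
  intro x hx
  rw [GG_norm hτ c hx.le]
  have h1 := tail_bound hτ hx
  have hee : Real.exp (β*x^2) * Real.exp (-β*x^2) = 1 := by
    rw [← Real.exp_add, show β*x^2 + -β*x^2 = 0 from by ring, Real.exp_zero]
  have h2 : ‖c‖ * Real.exp (β * x^2) * ((2/Real.sqrt Real.pi) * ‖∫ t in Ioi x, ff τ t‖)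
      ≤ ‖c‖ * Real.exp (β * x^2)
        * ((2/Real.sqrt Real.pi) * (‖aa τ‖ * (Real.exp (-β * x^2) / (2*β*x)))) := by
    gcongr
  refine le_trans h2 (le_of_eq ?_)
  calc ‖c‖ * Real.exp (β * x^2)
        * ((2/Real.sqrt Real.pi) * (‖aa τ‖ * (Real.exp (-β * x^2) / (2*β*x))))
      = (‖c‖ * (2/Real.sqrt Real.pi) * ‖aa τ‖ / (2*β)) / x
        * (Real.exp (β*x^2) * Real.exp (-β*x^2)) := by ring
    _ = (‖c‖ * (2/Real.sqrt Real.pi) * ‖aa τ‖ / (2*β)) / x := by rw [hee, mul_one]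

lemma GG_tendsto (hτ : 0 < τ.im) (c : ℂ) : Tendsto (GG τ c) atTop (nhds 0) := by
  obtain ⟨K, _, hK⟩ := GG_decay hτ c
  refine squeeze_zero_norm' (a := fun x : ℝ => K / x) ?_ ?_
  · filter_upwards [eventually_gt_atTop 0] with x hx
    exact hK x hx
  · simpa [div_eq_mul_inv] using tendsto_inv_atTop_zero.const_mul K

lemma GG_bounded (hτ : 0 < τ.im) (c : ℂ) : ∃ C : ℝ, ∀ x : ℝ, 0 < x → ‖GG τ c x‖ ≤ C := by
  obtain ⟨K, hK0, hK⟩ := GG_decay hτ c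
  set N0 := ∫ t in Ioi (0:ℝ), ‖ff τ t‖ with hN0
  refine ⟨max (‖c‖ * Real.exp (bb τ).re * ((2/Real.sqrt Real.pi) * N0)) K, ?_⟩
  intro x hx
  rcases le_total x 1 with h1 | h1
  · refine le_trans ?_ (le_max_left _ _)
    rw [GG_norm hτ c hx.le]
    have hx2 : x^2 ≤ 1 := by nlinarith
    have e1 : Real.exp ((bb τ).re * x^2) ≤ Real.exp (bb τ).re := by
      rw [Real.exp_le_exp]
      nlinarith [bb_re_pos hτ]
    have e2 : ‖∫ t in Ioi x, ff τ t‖ ≤ N0 := by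
      refine le_trans (norm_integral_le_integral_norm _) ?_
      exact setIntegral_mono_set (ff_integrable hτ).norm.integrableOn
        (ae_of_all _ fun t => norm_nonneg _)
        (HasSubset.Subset.eventuallyLE (Ioi_subset_Ioi hx.le))
    exact mul_le_mul (mul_le_mul_of_nonneg_left e1 (norm_nonneg c))
      (mul_le_mul_of_nonneg_left e2 (by positivity)) (by positivity) (by positivity)
  · exact le_trans (hK x hx) (le_trans (by
      calc K / x ≤ K / 1 := by gcongr
        _ = K := div_one K) (le_max_right _ _))
lemma GG_hasDeriv (c : ℂ) (x : ℝ) : HasDerivAt (GG τ c)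
    (c * (Complex.exp (bb τ*(x:ℂ)^2) * (bb τ*(2*(x:ℂ)))
        * (1-(2/(Real.sqrt Real.pi:ℂ))*uu τ x)
      + Complex.exp (bb τ*(x:ℂ)^2) * (-((2/(Real.sqrt Real.pi:ℂ)) * ff τ x)))) x := by
  have h1 : HasDerivAt (fun y:ℝ => (y:ℂ)) 1 x := by simpa using (hasDerivAt_id x).ofReal_comp
  have h2 : HasDerivAt (fun y:ℝ => bb τ*(y:ℂ)^2) (bb τ*(2*(x:ℂ))) x := by
    have := (h1.mul h1).const_mul (bb τ)
    simpa [pow_two, two_mul, mul_add, mul_assoc] using this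
  have hfun : GG τ c = fun y:ℝ =>
      c * (Complex.exp (bb τ*(y:ℂ)^2) * (1 - (2/(Real.sqrt Real.pi:ℂ))*uu τ y)) := by
    funext y; rw [GG, mul_assoc]
  rw [hfun]
  have h4 : HasDerivAt (fun y => 1 - (2/(Real.sqrt Real.pi:ℂ))*uu τ y)
      (-((2/(Real.sqrt Real.pi:ℂ)) * ff τ x)) x := ((uu_hasDeriv x).const_mul _).const_sub 1
  exact (h2.cexp.mul h4).const_mul c

lemma expneg_hasDeriv (x : ℝ) : HasDerivAt (fun y:ℝ => Complex.exp (-(bb τ)*(y:ℂ)^2))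
    (Complex.exp (-(bb τ)*(x:ℂ)^2) * (-(bb τ)*(2*(x:ℂ)))) x := by
  have h1 : HasDerivAt (fun y:ℝ => (y:ℂ)) 1 x := by simpa using (hasDerivAt_id x).ofReal_comp
  have h2 : HasDerivAt (fun y:ℝ => -(bb τ)*(y:ℂ)^2) (-(bb τ)*(2*(x:ℂ))) x := by
    have := (h1.mul h1).const_mul (-(bb τ))
    simpa [pow_two, two_mul, mul_add, mul_assoc] using this
  exact h2.cexp

lemma GG_ode (hτ : 0 < τ.im) (c : ℂ) (x : ℝ) :
    deriv (GG τ c) x + 2*(Real.pi:ℂ)*Complex.I*τ*(x:ℂ)*GG τ c x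
      = -2*csqrt (-Complex.I*τ)*c := by
  rw [(GG_hasDeriv c x).deriv]
  have hcancel : Complex.exp (bb τ*(x:ℂ)^2) * ff τ x = aa τ := by
    rw [ff, mul_comm (aa τ), ← mul_assoc, ← Complex.exp_add,
      show bb τ*(x:ℂ)^2 + -(bb τ)*(x:ℂ)^2 = 0 from by ring, Complex.exp_zero, one_mul]
  have hIτ : 2*(Real.pi:ℂ)*Complex.I*τ = -2*bb τ := by rw [bb]; ring
  have hs : ((Real.sqrt Real.pi:ℝ):ℂ) ≠ 0 := by exact_mod_cast sqrt_pi_pos.ne'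
  have hsq : csqrt (-Complex.I*τ) = aa τ / (Real.sqrt Real.pi:ℂ) := by
    rw [aa_eq hτ]; field_simp
  rw [GG, hIτ, hsq]
  linear_combination ((-2:ℂ)/(Real.sqrt Real.pi:ℂ) * c) * hcancel

lemma hIτbb : 2*(Real.pi:ℂ)*Complex.I*τ = -2*bb τ := by rw [bb]; ring

lemma GG_unique (hτ : 0 < τ.im) (c : ℂ) (h : ℝ → ℂ)
    (hb : ∃ C : ℝ, ∀ x : ℝ, 0 < x → ‖h x‖ ≤ C)
    (hd : ∀ x : ℝ, 0 < x → DifferentiableAt ℝ h x)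
    (hode : ∀ x : ℝ, 0 < x →
      deriv h x + 2*(Real.pi:ℂ)*Complex.I*τ*(x:ℂ)*h x = -2*csqrt (-Complex.I*τ)*c) :
    ∀ x : ℝ, 0 < x → h x = GG τ c x := by
  obtain ⟨C1, hC1⟩ := hb
  obtain ⟨C2, hC2⟩ := GG_bounded hτ c
  intro x hx
  set φ : ℝ → ℂ := fun y => (h y - GG τ c y) * Complex.exp (-(bb τ) * (y:ℂ)^2) with hφdef
  have hder : ∀ z:ℝ, 0 < z → HasDerivAt φ 0 z := by
    intro z hz
    have hhd : HasDerivAt h (deriv h z) z := (hd z hz).hasDerivAt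
    have hG' : HasDerivAt (GG τ c) (deriv (GG τ c) z) z :=
      (GG_hasDeriv c z).differentiableAt.hasDerivAt
    have e3 : deriv h z - deriv (GG τ c) z = 2 * bb τ * (z:ℂ) * (h z - GG τ c z) := by
      have e1 := hode z hz
      have e2 := GG_ode hτ c z
      linear_combination e1 - e2 - ((z:ℂ)*(h z - GG τ c z)) * (hIτbb (τ := τ))
    have key := (hhd.sub hG').mul (expneg_hasDeriv (τ := τ) z)
    refine key.congr_deriv ?_
    rw [Pi.sub_apply]
    linear_combination (Complex.exp (-(bb τ)*(z:ℂ)^2)) * e3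
  have hconst : ∀ y:ℝ, x ≤ y → φ y = φ x := by
    intro y hy
    exact constant_of_has_deriv_right_zero
      (fun z hz => ((hder z (lt_of_lt_of_le hx hz.1)).continuousAt.continuousWithinAt))
      (fun z hz => (hder z (lt_of_lt_of_le hx hz.1)).hasDerivWithinAt)
      y (right_mem_Icc.2 hy)
  have hexpnorm : ∀ y:ℝ, ‖Complex.exp (-(bb τ) * (y:ℂ)^2)‖ = Real.exp (-(bb τ).re * y^2) := by
    intro y
    rw [Complex.norm_exp,
      show -(bb τ) * (y:ℂ)^2 = (↑(y^2) : ℂ) * -(bb τ) by push_cast; ring,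
      Complex.re_ofReal_mul, Complex.neg_re]
    ring_nf
  have hbound : ∀ y:ℝ, x ≤ y → ‖φ x‖ ≤ (C1 + C2) * Real.exp (-(bb τ).re * y^2) := by
    intro y hy
    have hy0 : 0 < y := lt_of_lt_of_le hx hy
    rw [← hconst y hy, hφdef]
    simp only [norm_mul]
    rw [hexpnorm y]
    have : ‖h y - GG τ c y‖ ≤ C1 + C2 :=
      le_trans (norm_sub_le _ _) (add_le_add (hC1 y hy0) (hC2 y hy0))
    exact mul_le_mul_of_nonneg_right this (Real.exp_pos _).le
  have hφ0 : φ x = 0 := by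
    have h2 : Tendsto (fun y:ℝ => -(bb τ).re * y^2) atTop atBot := by
      have hsq : Tendsto (fun y:ℝ => y^2) atTop atTop := tendsto_pow_atTop two_ne_zero
      exact hsq.const_mul_atTop_of_neg (neg_neg_iff_pos.2 (bb_re_pos hτ))
    have htend : Tendsto (fun y:ℝ => (C1 + C2) * Real.exp (-(bb τ).re * y^2)) atTop (nhds 0) := by
      have := (Real.tendsto_exp_atBot.comp h2).const_mul (C1 + C2)
      simpa using this
    have hle : ‖φ x‖ ≤ 0 := by
      refine ge_of_tendsto htend ?_
      filter_upwards [eventually_ge_atTop x] with y hy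
      exact hbound y hy
    exact norm_le_zero_iff.1 hle
  have : (h x - GG τ c x) * Complex.exp (-(bb τ) * (x:ℂ)^2) = 0 := hφ0
  rcases mul_eq_zero.1 this with h5 | h5
  · exact sub_eq_zero.1 h5
  · exact absurd h5 (Complex.exp_ne_zero _)

/-- properties and uniqueness of
`g(x) = c·exp(-πiτx²)·erfc(√(-iπτ)·x)` on `(0,∞)`. -/
theorem stmt1 (τ : ℂ) (hτ : 0 < τ.im) (c : ℂ) (g : ℝ → ℂ)
    (hg : ∀ x : ℝ, g x =
      c * Complex.exp (-(Real.pi : ℂ) * Complex.I * τ * (x : ℂ) ^ 2) *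
        erfcC (csqrt (-Complex.I * (Real.pi : ℂ) * τ) * (x : ℂ))) :
    (∃ C : ℝ, ∀ x : ℝ, 0 < x → ‖g x‖ ≤ C) ∧
    (∀ x : ℝ, 0 < x → DifferentiableAt ℝ g x) ∧
    Tendsto g atTop (nhds 0) ∧
    (∀ x : ℝ, 0 < x →
      deriv g x + 2 * (Real.pi : ℂ) * Complex.I * τ * (x : ℂ) * g x =
        -2 * csqrt (-Complex.I * τ) * c) ∧
    (∀ h : ℝ → ℂ, (∃ C : ℝ, ∀ x : ℝ, 0 < x → ‖h x‖ ≤ C) →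
      (∀ x : ℝ, 0 < x → DifferentiableAt ℝ h x) →
      (∀ x : ℝ, 0 < x →
        deriv h x + 2 * (Real.pi : ℂ) * Complex.I * τ * (x : ℂ) * h x =
          -2 * csqrt (-Complex.I * τ) * c) →
      ∀ x : ℝ, 0 < x → h x = g x) := by
  have geq := g_eq_GG c hτ g hg
  rw [geq]
  exact ⟨GG_bounded hτ c, fun x _ => (GG_hasDeriv c x).differentiableAt, GG_tendsto hτ c,
    fun x _ => GG_ode hτ c x, fun h hb hd hode => GG_unique hτ c h hb hd hode⟩
end
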